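/- For every positive integer m and every k with 1 ≤ k ≤ m, the binomial identity Σ_{j=0}^{m} (−1)^{m−j} (2j+1)^{2k−1} C(2m+1, m−j) = 0 holds. -/

import Mathlib

open Polynomial Finset fwdDiff

lemma fwdDiff_poly_eval (p : ℝ[X]) :
    Δ_[(1:ℝ)] (fun x : ℝ ↦ p.eval x) = fun x : ℝ ↦ (p.comp (X + 1) - p).eval x := by
  ext x
  simp [fwdDiff, eval_comp]

lemma degree_comp_X_add_one_sub_lt (p : ℝ[X]) (hp : p ≠ 0) :
    (p.comp (X + 1) - p).degree < p.degree := by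
  have hX : (X + 1 : ℝ[X]) = X + C 1 := by rw [C_1]
  have hnd : (X + 1 : ℝ[X]).natDegree = 1 := by rw [hX, natDegree_X_add_C]
  have h2 : (p.comp (X + 1)).leadingCoeff = p.leadingCoeff := by
    rw [leadingCoeff_comp (by rw [hnd]; norm_num), hX, leadingCoeff_X_add_C, one_pow, mul_one]
  have h3 : p.comp (X + 1) ≠ 0 := by
    intro h
    apply hp
    rw [← leadingCoeff_eq_zero, ← h2, h, leadingCoeff_zero]
  have h1 : (p.comp (X + 1)).degree = p.degree := by
    rw [degree_eq_natDegree h3, degree_eq_natDegree hp, natDegree_comp, hnd, mul_one]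
  have := degree_sub_lt h1 h3 h2
  rwa [h1] at this

lemma fwdDiff_iter_poly_zero (n : ℕ) (p : ℝ[X]) (hd : p.degree < n) :
    (fwdDiff (1:ℝ))^[n] (fun x : ℝ ↦ p.eval x) = 0 := by
  induction n generalizing p with
  | zero =>
    have hp : p = 0 := by
      rw [← degree_eq_bot]
      simpa using hd
    subst hp
    funext x
    simp
  | succ n ih =>
    rw [Function.iterate_succ_apply, fwdDiff_poly_eval]
    rcases eq_or_ne p 0 with rfl | hp
    · have h0 : (0 : ℝ[X]).comp (X + 1) - 0 = 0 := by simp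
      rw [h0]
      apply ih
      rw [degree_zero]
      exact_mod_cast WithBot.bot_lt_coe (n : ℕ)
    · apply ih
      calc (p.comp (X+1) - p).degree < p.degree := degree_comp_X_add_one_sub_lt p hp
        _ ≤ (n : WithBot ℕ) := by
          rcases hdeg : p.degree with _ | d
          · exact bot_le
          · rw [hdeg, Nat.cast_withBot] at hd
            rw [Nat.cast_withBot]
            exact WithBot.coe_le_coe.mpr (Nat.lt_succ_iff.mp (WithBot.coe_lt_coe.mp hd))

theorem trig_binomial_identity (m k : ℕ) (hm : 1 ≤ m) (hk : 1 ≤ k) (hkm : k ≤ m) :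
    ∑ j ∈ Finset.range (m + 1),
      (-1 : ℝ) ^ (m - j) * ((2 * j + 1 : ℝ)) ^ (2 * k - 1) *
        ((2 * m + 1).choose (m - j) : ℝ) = 0 := by
  set g : ℕ → ℝ := fun i ↦ (-1 : ℝ) ^ i * ((2 * m + 1 : ℝ) - 2 * i) ^ (2 * k - 1) *
      ((2 * m + 1).choose i : ℝ) with hg
  have hodd : Odd (2 * k - 1) := by
    refine ⟨k - 1, ?_⟩
    omega
  -- the sign identity
  have hsign : ∀ i ≤ 2 * m + 1, (-1 : ℝ) ^ (2 * m + 1 - i) = -(-1 : ℝ) ^ i := by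
    intro i hi
    have h : (-1 : ℝ) ^ (2 * m + 1 - i) * (-1 : ℝ) ^ i = (-1 : ℝ) ^ (2 * m + 1) := by
      rw [← pow_add]
      congr 1
      omega
    have h2 : (-1 : ℝ) ^ (2 * m + 1) = -1 := Odd.neg_one_pow ⟨m, by ring⟩
    rcases neg_one_pow_eq_one_iff_even (R := ℝ) (by norm_num) |>.symm with _
    have hi2 : ((-1 : ℝ) ^ i) * ((-1 : ℝ) ^ i) = 1 := by
      rw [← pow_add]
      exact Even.neg_one_pow ⟨i, rfl⟩
    calc (-1 : ℝ) ^ (2 * m + 1 - i) = (-1 : ℝ) ^ (2 * m + 1 - i) * ((-1 : ℝ) ^ i * (-1 : ℝ) ^ i) := by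
          rw [hi2, mul_one]
      _ = -(-1 : ℝ) ^ i := by rw [← mul_assoc, h, h2]; ring
  -- symmetry of g
  have hsym : ∀ i, m + 1 ≤ i → i ≤ 2 * m + 1 → g i = g (2 * m + 1 - i) := by
    intro i h1 h2
    simp only [hg]
    rw [Nat.choose_symm h2, hsign _ (by omega)]
    have hc : ((2 * m + 1 - i : ℕ) : ℝ) = 2 * m + 1 - i := by
      push_cast [Nat.cast_sub h2]
      ring
    rw [hc]
    have : ((2 * m + 1 : ℝ) - 2 * (2 * m + 1 - (i : ℝ))) = -((2 * m + 1 : ℝ) - 2 * i) := by ring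
    rw [this, hodd.neg_pow]
    ring
  -- the full sum vanishes by finite differences
  set p : Polynomial ℝ := (Polynomial.C (2 * m + 1 : ℝ) - Polynomial.C 2 * Polynomial.X) ^ (2 * k - 1) with hp
  have hpdeg : p.degree < ((2 * m + 1 : ℕ) : WithBot ℕ) := by
    have h1 : (Polynomial.C (2 * m + 1 : ℝ) - Polynomial.C 2 * Polynomial.X).degree = 1 := by
      have : Polynomial.C (2 * m + 1 : ℝ) - Polynomial.C 2 * Polynomial.X
          = Polynomial.C (-2 : ℝ) * Polynomial.X + Polynomial.C (2 * m + 1 : ℝ) := by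
        simp [map_neg]; ring
      rw [this, Polynomial.degree_linear (by norm_num)]
    calc p.degree ≤ (2 * k - 1) • (Polynomial.C (2 * m + 1 : ℝ) - Polynomial.C 2 * Polynomial.X).degree :=
          Polynomial.degree_pow_le _ _
      _ = ((2 * k - 1 : ℕ) : WithBot ℕ) := by rw [h1]; simp
      _ < ((2 * m + 1 : ℕ) : WithBot ℕ) := by
          exact_mod_cast (show 2 * k - 1 < 2 * m + 1 by omega)
  have hpe : ∀ i : ℕ, p.eval (i : ℝ) = ((2 * m + 1 : ℝ) - 2 * i) ^ (2 * k - 1) := by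
    intro i
    simp [hp]
  have hT : ∑ i ∈ Finset.range (2 * m + 2), g i = 0 := by
    have h0 := congrFun (fwdDiff_iter_poly_zero (2 * m + 1) p hpdeg) 0
    rw [fwdDiff_iter_eq_sum_shift] at h0
    simp only [Pi.zero_apply] at h0
    have : ∑ i ∈ Finset.range (2 * m + 2), (-(g i)) = 0 := by
      rw [← h0]
      apply Finset.sum_congr (by norm_num)
      intro i hi
      rw [Finset.mem_range] at hi
      have hi' : i ≤ 2 * m + 1 := by omega
      rw [zsmul_eq_mul]
      push_cast
      rw [nsmul_eq_mul, mul_one, zero_add, hpe, hsign i hi', hg]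
      ring
    rwa [Finset.sum_neg_distrib, neg_eq_zero] at this
  -- split the full sum into two equal halves
  have h2 : ∑ i ∈ Finset.Ico (m + 1) (2 * m + 2), g i = ∑ j ∈ Finset.range (m + 1), g j := by
    rw [Finset.range_eq_Ico]
    apply Finset.sum_nbij' (fun i ↦ 2 * m + 1 - i) (fun j ↦ 2 * m + 1 - j)
    · intro a ha
      rw [Finset.mem_Ico] at ha ⊢
      omega
    · intro a ha
      rw [Finset.mem_Ico] at ha ⊢
      omega
    · intro a ha
      rw [Finset.mem_Ico] at ha
      omega
    · intro a ha
      rw [Finset.mem_Ico] at ha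
      omega
    · intro a ha
      rw [Finset.mem_Ico] at ha
      exact hsym a ha.1 (by omega)
  have hsplit : ∑ i ∈ Finset.range (m + 1), g i + ∑ i ∈ Finset.Ico (m + 1) (2 * m + 2), g i
      = ∑ i ∈ Finset.range (2 * m + 2), g i := by
    rw [Finset.range_eq_Ico, Finset.range_eq_Ico]
    exact Finset.sum_Ico_consecutive g (by omega : 0 ≤ m + 1) (by omega : m + 1 ≤ 2 * m + 2)
  have hS2 : ∑ i ∈ Finset.range (m + 1), g i = 0 := by
    rw [h2, hT] at hsplit
    linarith
  -- relate the target sum to S2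
  have hrefl := Finset.sum_range_reflect g (m + 1)
  simp only [Nat.add_sub_cancel] at hrefl
  rw [← hS2, ← hrefl]
  apply Finset.sum_congr rfl
  intro j hj
  rw [Finset.mem_range] at hj
  have hjm : j ≤ m := by omega
  simp only [hg]
  have hc : ((m - j : ℕ) : ℝ) = (m : ℝ) - j := by
    push_cast [Nat.cast_sub hjm]
    ring
  rw [hc]
  have : ((2 * m + 1 : ℝ) - 2 * ((m : ℝ) - j)) = 2 * j + 1 := by ring
  rw [this]
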